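/- arXiv:2102.11939 — 8 statements merged into one kernel-verified Lean document; each statement's English description precedes it below -/
import Mathlib

section
/- Let V be a real vector space and N : V → ℝ a convex functional. Let G, Ġ : V → V satisfy, for some constants Δt_FE > 0 and k̇ > 0: (forward Euler condition) N(u + h·G(u)) ≤ N(u) for all u ∈ V and all 0 ≤ h ≤ Δt_FE; and (backward derivative condition) N(u − h²·Ġ(u)) ≤ N(u) for all u ∈ V and all h ≥ 0 with h² ≤ k̇·Δt_FE². Consider an s-stage implicit two-derivative Runge–Kutta method in Shu–Osher form: stages u⁽¹⁾,…,u⁽ˢ⁾ ∈ V satisfy u⁽ⁱ⁾ = rᵢ·uⁿ + Σ_{j<i} p_{ij}·u⁽ʲ⁾ + Δt·d_{ii}·G(u⁽ⁱ⁾) + Δt²·ḋ_{ii}·Ġ(u⁽ⁱ⁾) for i = 1,…,s, where rᵢ = 1 − Σ_{j<i} p_{ij}, and u^{n+1} = u⁽ˢ⁾. If all coefficients satisfy rᵢ ≥ 0, p_{ij} ≥ 0, d_{ii} ≥ 0 and ḋ_{ii} ≤ 0, then for every time step Δt > 0 the method preserves the strong stability property: N(u^{n+1}) ≤ N(uⁿ).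 -/
open Finset

/-- An implicit two-derivative Runge--Kutta method in Shu--Osher form with
nonnegative coefficients `rᵢ, p_{ij}, d_{ii}` and nonpositive `ḋ_{ii}` is unconditionally SSP,
given the forward Euler condition on `G` and the backward derivative condition on `Ġ`. -/
theorem unconditional_SSP_implicit_two_derivative_RK
    {V : Type*} [AddCommGroup V] [Module ℝ V]
    (N : V → ℝ)
    (hN : ∀ x y : V, ∀ θ : ℝ, 0 ≤ θ → θ ≤ 1 →
      N (θ • x + (1 - θ) • y) ≤ θ * N x + (1 - θ) * N y)
    (G Gdot : V → V) (ΔtFE kdot : ℝ) (hΔtFE : 0 < ΔtFE) (hkdot : 0 < kdot)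
    (hFE : ∀ u : V, ∀ h : ℝ, 0 ≤ h → h ≤ ΔtFE → N (u + h • G u) ≤ N u)
    (hBD : ∀ u : V, ∀ h : ℝ, 0 ≤ h → h ^ 2 ≤ kdot * ΔtFE ^ 2 →
      N (u - (h ^ 2) • Gdot u) ≤ N u)
    (s : ℕ) (p : Fin (s + 1) → Fin (s + 1) → ℝ)
    (d ddot r : Fin (s + 1) → ℝ)
    (hr : ∀ i, r i = 1 - ∑ j ∈ Finset.univ.filter (fun j => j < i), p i j)
    (hrnonneg : ∀ i, 0 ≤ r i) (hp : ∀ i j, 0 ≤ p i j)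
    (hd : ∀ i, 0 ≤ d i) (hddot : ∀ i, ddot i ≤ 0)
    (Δt : ℝ) (hΔt : 0 < Δt)
    (un : V) (u : Fin (s + 1) → V)
    (hstage : ∀ i, u i = r i • un
      + (∑ j ∈ Finset.univ.filter (fun j => j < i), p i j • u j)
      + (Δt * d i) • G (u i) + (Δt ^ 2 * ddot i) • Gdot (u i)) :
    N (u (Fin.last s)) ≤ N un := by
  have hcon : ConvexOn ℝ Set.univ N := by
    refine ⟨convex_univ, fun x _ y _ a b ha hb hab => ?_⟩
    have := hN x y a ha (by linarith)
    rwa [show (1:ℝ) - a = b by linarith] at this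
  -- three-point convexity
  have convex3 : ∀ (a b c : ℝ), 0 ≤ a → 0 ≤ b → 0 ≤ c → a + b + c = 1 →
      ∀ x y z : V, N (a • x + b • y + c • z) ≤ a * N x + b * N y + c * N z := by
    intro a b c ha hb hc habc x y z
    have := hcon.map_sum_le (t := Finset.univ) (w := ![a, b, c]) (p := ![x, y, z])
      (by intro i _; fin_cases i <;> simpa) (by simp [Fin.sum_univ_three]; linarith)
      (by intro i _; trivial)
    simpa [Fin.sum_univ_three, add_assoc] using this
  have key : ∀ n : ℕ, ∀ i : Fin (s + 1), (i : ℕ) = n → N (u i) ≤ N un := by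
    intro n
    induction n using Nat.strong_induction_on with
    | _ n IH =>
      intro i hi
      set t : Finset (Fin (s + 1)) := Finset.univ.filter (fun j => j < i) with ht
      set v : V := r i • un + ∑ j ∈ t, p i j • u j with hv
      -- Jensen for v
      have hvle : N v ≤ N un := by
        set T : Finset (Option (Fin (s + 1))) := insert none (t.image Option.some) with hT
        have hnm : (none : Option (Fin (s+1))) ∉ t.image Option.some := by simp
        have hsum : ∑ o ∈ T, Option.elim o (r i) (p i) = 1 := by
          rw [hT, Finset.sum_insert hnm, Finset.sum_image (fun a _ b _ h => Option.some_injective _ h)]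
          simp [hr i, ht]
        have hjen := hcon.map_sum_le (t := T) (w := fun o => Option.elim o (r i) (p i))
          (p := fun o => Option.elim o un u)
          (by rintro (_|j) _; exacts [hrnonneg i, hp i j]) hsum (by intro o _; trivial)
        rw [hT, Finset.sum_insert hnm, Finset.sum_insert hnm,
          Finset.sum_image (fun a _ b _ h => Option.some_injective _ h),
          Finset.sum_image (fun a _ b _ h => Option.some_injective _ h)] at hjen
        simp only [Option.elim] at hjen
        refine le_trans hjen ?_
        have hb : ∀ j ∈ t, p i j * N (u j) ≤ p i j * N un := by
          intro j hj
          have hjlt : j < i := by simpa [ht] using hj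
          exact mul_le_mul_of_nonneg_left
            (IH j (by omega) j rfl) (hp i j)
        calc r i * N un + ∑ j ∈ t, p i j * N (u j)
            ≤ r i * N un + ∑ j ∈ t, p i j * N un :=
              add_le_add le_rfl (Finset.sum_le_sum hb)
          _ = (r i + ∑ j ∈ t, p i j) * N un := by rw [add_mul, Finset.sum_mul]
          _ = N un := by rw [hr i, ht]; ring
      -- implicit stage bound: N (u i) ≤ N v
      obtain ⟨a, ha⟩ : ∃ x : ℝ, x = Δt * d i := ⟨_, rfl⟩
      obtain ⟨c, hc⟩ : ∃ x : ℝ, x = -(Δt ^ 2 * ddot i) := ⟨_, rfl⟩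
      have ha0 : 0 ≤ a := by rw [ha]; exact mul_nonneg hΔt.le (hd i)
      have hc0 : 0 ≤ c := by
        rw [hc]
        have : Δt ^ 2 * ddot i ≤ 0 :=
          mul_nonpos_of_nonneg_of_nonpos (by positivity) (hddot i)
        linarith
      obtain ⟨K, hK⟩ : ∃ x : ℝ, x = kdot * ΔtFE ^ 2 := ⟨_, rfl⟩
      have hK0 : 0 < K := by rw [hK]; positivity
      obtain ⟨E, hE⟩ : ∃ x : ℝ, x = ΔtFE * K + a * K + c * ΔtFE := ⟨_, rfl⟩
      have hE0 : 0 < E := by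
        rw [hE]
        have h1 : 0 < ΔtFE * K := by positivity
        have h2 : 0 ≤ a * K := mul_nonneg ha0 hK0.le
        have h3 : 0 ≤ c * ΔtFE := mul_nonneg hc0 hΔtFE.le
        linarith
      obtain ⟨lam, hlam⟩ : ∃ x : ℝ, x = ΔtFE * K / E := ⟨_, rfl⟩
      obtain ⟨th, hth⟩ : ∃ x : ℝ, x = a * K / E := ⟨_, rfl⟩
      obtain ⟨mu, hmu⟩ : ∃ x : ℝ, x = c * ΔtFE / E := ⟨_, rfl⟩
      have hlam0 : 0 < lam := by rw [hlam]; positivity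
      have hth0 : 0 ≤ th := by rw [hth]; positivity
      have hmu0 : 0 ≤ mu := by rw [hmu]; positivity
      have hsum3 : lam + th + mu = 1 := by
        rw [hlam, hth, hmu, ← add_div, ← add_div, ← hE,
          div_self hE0.ne']
      have e1 : th * ΔtFE = lam * a := by
        rw [hth, hlam]; ring
      have e2 : mu * K = lam * c := by
        rw [hmu, hlam]; ring
      have hstagei := hstage i
      have hveq : u i = v + a • G (u i) + (-c) • Gdot (u i) := by
        rw [hv, ht, ha, hc]; simpa using hstagei
      have hv' : v = u i - a • G (u i) + c • Gdot (u i) := by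
        linear_combination (norm := module) hveq.symm
      have hcomb : lam • v + th • (u i + ΔtFE • G (u i))
          + mu • (u i - K • Gdot (u i)) = u i := by
        rw [hv']
        match_scalars
        · linear_combination hsum3
        · linear_combination e1
        · linear_combination -e2
      have hNle := convex3 lam th mu hlam0.le hth0 hmu0 hsum3 v
        (u i + ΔtFE • G (u i)) (u i - K • Gdot (u i))
      rw [hcomb] at hNle
      have hw1 : N (u i + ΔtFE • G (u i)) ≤ N (u i) := hFE _ _ hΔtFE.le le_rfl
      have hw2 : N (u i - K • Gdot (u i)) ≤ N (u i) := by
        have h2 := hBD (u i) (Real.sqrt kdot * ΔtFE)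
          (by positivity) (by rw [mul_pow, Real.sq_sqrt hkdot.le])
        rwa [mul_pow, Real.sq_sqrt hkdot.le, ← hK] at h2
      have hmain : N (u i) ≤ lam * N v + th * N (u i) + mu * N (u i) := by
        calc N (u i) ≤ lam * N v + th * N (u i + ΔtFE • G (u i))
              + mu * N (u i - K • Gdot (u i)) := hNle
          _ ≤ _ := by gcongr
      have hexp : lam * N (u i) = N (u i) - th * N (u i) - mu * N (u i) := by
        linear_combination (N (u i)) * hsum3
      have hfin : N (u i) ≤ N v := by
        have h1 : lam * N (u i) ≤ lam * N v := by linarith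
        exact le_of_mul_le_mul_left h1 hlam0
      exact hfin.trans hvle
  exact key (Fin.last s : Fin (s+1)).val (Fin.last s) rfl
end

section
/- Let V be a real vector space and N : V → ℝ a convex functional. Let G : V → V satisfy the forward Euler condition with constant Δt_FE > 0, and Ġ : V → V satisfy the backward derivative condition with constants Δt_FE and k̇ > 0. Let d ≥ 0 and ḋ ≤ 0 be real numbers, Δt > 0, and suppose u, v ∈ V satisfy the implicit stage relation v = u + Δt·d·G(v) + Δt²·ḋ·Ġ(v). Then N(v) ≤ N(u), with no restriction on the size of Δt. -/
private lemma implicit_stage_aux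
    {V : Type*} [AddCommGroup V] [Module ℝ V]
    (N : V → ℝ)
    (hN : ∀ x y : V, ∀ θ : ℝ, 0 ≤ θ → θ ≤ 1 →
      N (θ • x + (1 - θ) • y) ≤ θ * N x + (1 - θ) * N y)
    (G Gdot : V → V) (ΔtFE kdot : ℝ) (hΔtFE : 0 < ΔtFE) (hkdot : 0 < kdot)
    (hFE : ∀ u : V, ∀ h : ℝ, 0 ≤ h → h ≤ ΔtFE → N (u + h • G u) ≤ N u)
    (hBD : ∀ u : V, ∀ h : ℝ, 0 ≤ h → h ^ 2 ≤ kdot * ΔtFE ^ 2 →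
      N (u - (h ^ 2) • Gdot u) ≤ N u)
    (a b : ℝ) (ha0 : 0 ≤ a) (hb0 : b ≤ 0)
    (u v : V) (hstage : v = u + a • G v + b • Gdot v) :
    N v ≤ N u := by
  obtain ⟨r, hr0, h2a, h2b⟩ :
      ∃ r : ℝ, 0 < r ∧ 2 * r * a ≤ ΔtFE ∧ -(2 * r * b) ≤ kdot * ΔtFE ^ 2 := by
    refine ⟨min (ΔtFE / (2 * a + 1)) (kdot * ΔtFE ^ 2 / (1 - 2 * b)), ?_, ?_, ?_⟩
    · exact lt_min (div_pos hΔtFE (by linarith)) (div_pos (by positivity) (by linarith))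
    · have h1 := min_le_left (ΔtFE / (2 * a + 1)) (kdot * ΔtFE ^ 2 / (1 - 2 * b))
      rw [le_div_iff₀ (by linarith : (0:ℝ) < 2 * a + 1)] at h1
      have h0 : 0 < min (ΔtFE / (2 * a + 1)) (kdot * ΔtFE ^ 2 / (1 - 2 * b)) :=
        lt_min (div_pos hΔtFE (by linarith)) (div_pos (by positivity) (by linarith))
      nlinarith
    · have h1 := min_le_right (ΔtFE / (2 * a + 1)) (kdot * ΔtFE ^ 2 / (1 - 2 * b))
      rw [le_div_iff₀ (by linarith : (0:ℝ) < 1 - 2 * b)] at h1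
      have h0 : 0 < min (ΔtFE / (2 * a + 1)) (kdot * ΔtFE ^ 2 / (1 - 2 * b)) :=
        lt_min (div_pos hΔtFE (by linarith)) (div_pos (by positivity) (by linarith))
      nlinarith
  have hnn : 0 ≤ -(2 * r * b) := by nlinarith
  obtain ⟨hh, hhnn, hh2⟩ : ∃ s : ℝ, 0 ≤ s ∧ s ^ 2 = -(2 * r * b) :=
    ⟨Real.sqrt (-(2 * r * b)), Real.sqrt_nonneg _, Real.sq_sqrt hnn⟩
  have hx : N (v + (2 * r * a) • G v) ≤ N v :=
    hFE v (2 * r * a) (by positivity) h2a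
  have hy : N (v - (hh ^ 2) • Gdot v) ≤ N v :=
    hBD v hh hhnn (by rw [hh2]; exact h2b)
  have hmid := hN (v + (2 * r * a) • G v) (v - (hh ^ 2) • Gdot v) (1 / 2)
    (by norm_num) (by norm_num)
  have hp : (0:ℝ) < 1 + r := by linarith
  have hθ0 : (0:ℝ) ≤ 1 / (1 + r) := by positivity
  have hθ1 : 1 / (1 + r) ≤ 1 := by rw [div_le_one hp]; linarith
  have hveq : (1 / (1 + r)) • ((1 / 2 : ℝ) • (v + (2 * r * a) • G v)
      + (1 - 1 / 2 : ℝ) • (v - (hh ^ 2) • Gdot v)) + (1 - 1 / (1 + r)) • u = v := by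
    have hu : u = v - a • G v - b • Gdot v := by
      rw [sub_sub, eq_sub_iff_add_eq, ← add_assoc]; exact hstage.symm
    rw [hu, hh2]
    have hpne : (1:ℝ) + r ≠ 0 := ne_of_gt hp
    match_scalars <;> field_simp <;> ring
  have hmain := hN ((1 / 2 : ℝ) • (v + (2 * r * a) • G v)
      + (1 - 1 / 2 : ℝ) • (v - (hh ^ 2) • Gdot v)) u (1 / (1 + r)) hθ0 hθ1
  rw [hveq] at hmain
  have hfrac : 0 < 1 - 1 / (1 + r) := by
    rw [sub_pos, div_lt_one hp]; linarith
  nlinarith [hmain, hmid, hx, hy, hfrac]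

/-- A single implicit stage `v = u + Δt·d·G(v) + Δt²·ḋ·Ġ(v)` with `d ≥ 0`,
`ḋ ≤ 0` satisfies `N(v) ≤ N(u)` for any `Δt > 0`, given the forward Euler condition on `G`
and the backward derivative condition on `Ġ`. -/
theorem implicit_stage_unconditionally_SSP
    {V : Type*} [AddCommGroup V] [Module ℝ V]
    (N : V → ℝ)
    (hN : ∀ x y : V, ∀ θ : ℝ, 0 ≤ θ → θ ≤ 1 →
      N (θ • x + (1 - θ) • y) ≤ θ * N x + (1 - θ) * N y)
    (G Gdot : V → V) (ΔtFE kdot : ℝ) (hΔtFE : 0 < ΔtFE) (hkdot : 0 < kdot)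
    (hFE : ∀ u : V, ∀ h : ℝ, 0 ≤ h → h ≤ ΔtFE → N (u + h • G u) ≤ N u)
    (hBD : ∀ u : V, ∀ h : ℝ, 0 ≤ h → h ^ 2 ≤ kdot * ΔtFE ^ 2 →
      N (u - (h ^ 2) • Gdot u) ≤ N u)
    (d ddot : ℝ) (hd : 0 ≤ d) (hddot : ddot ≤ 0)
    (Δt : ℝ) (hΔt : 0 < Δt)
    (u v : V)
    (hstage : v = u + (Δt * d) • G v + (Δt ^ 2 * ddot) • Gdot v) :
    N v ≤ N u :=
  implicit_stage_aux N hN G Gdot ΔtFE kdot hΔtFE hkdot hFE hBD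
    (Δt * d) (Δt ^ 2 * ddot) (mul_nonneg hΔt.le hd)
    (mul_nonpos_of_nonneg_of_nonpos (by positivity) hddot) u v hstage
end

section
/- Let V be a real vector space and N : V → ℝ a convex functional. Let F : V → V satisfy the forward Euler condition with constant Δt_FE > 0. Let r > 0, let r₀, p₁,…,p_m, w₁,…,w_m be nonnegative real numbers with r₀ + Σⱼ pⱼ + Σⱼ wⱼ = 1, let uⁿ ∈ V, and let u₁,…,u_m ∈ V satisfy N(uⱼ) ≤ N(uⁿ) for all j. Then for every 0 < Δt ≤ r·Δt_FE, the explicitly computed vector u_e = r₀·uⁿ + Σⱼ pⱼ·uⱼ + Σⱼ wⱼ·(uⱼ + (Δt/r)·F(uⱼ)) satisfies N(u_e) ≤ N(uⁿ). -/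
open Finset

/-- The explicitly computed convex combination
`u_e = r₀·uⁿ + Σⱼ pⱼ·uⱼ + Σⱼ wⱼ·(uⱼ + (Δt/r)·F(uⱼ))` satisfies `N(u_e) ≤ N(uⁿ)`
whenever `0 < Δt ≤ r·Δt_FE`, the coefficients are nonnegative and sum to one, and
`N(uⱼ) ≤ N(uⁿ)` for all `j`. -/
theorem explicit_convex_combination_SSP
    {V : Type*} [AddCommGroup V] [Module ℝ V]
    (N : V → ℝ)
    (hN : ∀ x y : V, ∀ θ : ℝ, 0 ≤ θ → θ ≤ 1 →
      N (θ • x + (1 - θ) • y) ≤ θ * N x + (1 - θ) * N y)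
    (F : V → V) (ΔtFE : ℝ) (hΔtFE : 0 < ΔtFE)
    (hFE : ∀ u : V, ∀ h : ℝ, 0 ≤ h → h ≤ ΔtFE → N (u + h • F u) ≤ N u)
    (r : ℝ) (hr : 0 < r)
    (m : ℕ) (r0 : ℝ) (p w : Fin m → ℝ)
    (hr0 : 0 ≤ r0) (hp : ∀ j, 0 ≤ p j) (hw : ∀ j, 0 ≤ w j)
    (hsum : r0 + (∑ j, p j) + (∑ j, w j) = 1)
    (un : V) (u : Fin m → V) (hu : ∀ j, N (u j) ≤ N un)
    (Δt : ℝ) (hΔt1 : 0 < Δt) (hΔt2 : Δt ≤ r * ΔtFE) :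
    N (r0 • un + (∑ j, p j • u j) + (∑ j, w j • (u j + (Δt / r) • F (u j)))) ≤ N un := by
  have hconv : ConvexOn ℝ Set.univ N := by
    refine ⟨convex_univ, ?_⟩
    intro x _ y _ a b ha hb hab
    have h := hN x y a ha (by linarith)
    have hb' : b = 1 - a := by linarith
    simpa [hb'] using h
  set c : Option (Fin m ⊕ Fin m) → ℝ := fun i =>
    match i with
    | none => r0
    | some (Sum.inl j) => p j
    | some (Sum.inr j) => w j with hc
  set z : Option (Fin m ⊕ Fin m) → V := fun i =>
    match i with
    | none => un
    | some (Sum.inl j) => u j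
    | some (Sum.inr j) => u j + (Δt / r) • F (u j) with hz
  have hc0 : ∀ i ∈ (Finset.univ : Finset (Option (Fin m ⊕ Fin m))), 0 ≤ c i := by
    rintro (_ | j | j) _ <;> simp [hc, hr0, hp, hw]
  have hc1 : ∑ i, c i = 1 := by
    simpa [hc, Fintype.sum_option, Fintype.sum_sum_type, add_assoc] using hsum
  have key := hconv.map_sum_le hc0 hc1 (fun i _ => Set.mem_univ (z i))
  have hNz : ∀ i, N (z i) ≤ N un := by
    rintro (_ | j | j)
    · simp [hz]
    · simpa [hz] using hu j
    · have h1 : N (u j + (Δt / r) • F (u j)) ≤ N (u j) := by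
        refine hFE _ _ (le_of_lt (div_pos hΔt1 hr)) ?_
        rw [div_le_iff₀ hr]
        linarith [hΔt2, mul_comm r ΔtFE]
      simpa [hz] using h1.trans (hu j)
  have hsum_eq : ∑ i, c i • z i =
      r0 • un + (∑ j, p j • u j) + (∑ j, w j • (u j + (Δt / r) • F (u j))) := by
    simp [hc, hz, Fintype.sum_option, Fintype.sum_sum_type, add_assoc]
  calc N (r0 • un + (∑ j, p j • u j) + (∑ j, w j • (u j + (Δt / r) • F (u j))))
      = N (∑ i, c i • z i) := by rw [hsum_eq]
    _ ≤ ∑ i, c i * N (z i) := key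
    _ ≤ ∑ i, c i * N un := by
        apply Finset.sum_le_sum
        intro i _
        exact mul_le_mul_of_nonneg_left (hNz i) (hc0 i (Finset.mem_univ i))
    _ = N un := by rw [← Finset.sum_mul, hc1, one_mul]
end

section
/- Let V be a real vector space and N : V → ℝ a convex functional. Let F : V → V satisfy the forward Euler condition with constant Δt_FE > 0; let G : V → V satisfy the forward Euler condition with constant k·Δt_FE for some k > 0; and let Ġ : V → V satisfy the backward derivative condition with constants Δt_FE and k̇ > 0. Consider an s-stage multi-derivative IMEX Runge–Kutta method in Shu–Osher form with parameter r > 0: stages u⁽¹⁾,…,u⁽ˢ⁾ ∈ V satisfy u⁽ⁱ⁾ = rᵢ·uⁿ + Σ_{j<i} p_{ij}·u⁽ʲ⁾ + Σ_{j<i} w_{ij}·(u⁽ʲ⁾ + (Δt/r)·F(u⁽ʲ⁾)) + Δt·d_{ii}·G(u⁽ⁱ⁾) + Δt²·ḋ_{ii}·Ġ(u⁽ⁱ⁾) for i = 1,…,s, where rᵢ = 1 − Σ_{j<i}(p_{ij} + w_{ij}), and u^{n+1} = u⁽ˢ⁾. If all coefficients satisfy rᵢ ≥ 0, p_{ij}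 ≥ 0, w_{ij} ≥ 0, d_{ii} ≥ 0 and ḋ_{ii} ≤ 0, then for every time step 0 < Δt ≤ r·Δt_FE the method preserves the strong stability property: N(u^{n+1}) ≤ N(uⁿ). -/
open Finset

/-- Three-point Jensen inequality for a convex functional. -/
lemma convex3_aux {V : Type*} [AddCommGroup V] [Module ℝ V] (N : V → ℝ)
    (hN : ∀ x y : V, ∀ θ : ℝ, 0 ≤ θ → θ ≤ 1 →
      N (θ • x + (1 - θ) • y) ≤ θ * N x + (1 - θ) * N y)
    (x y z : V) (θ₁ θ₂ θ₃ : ℝ) (h1 : 0 ≤ θ₁) (h2 : 0 ≤ θ₂) (h3 : 0 ≤ θ₃)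
    (hs : θ₁ + θ₂ + θ₃ = 1) :
    N (θ₁ • x + θ₂ • y + θ₃ • z) ≤ θ₁ * N x + θ₂ * N y + θ₃ * N z := by
  rcases eq_or_lt_of_le (show θ₁ ≤ 1 by linarith) with h | h
  · have hθ₂ : θ₂ = 0 := by linarith
    have hθ₃ : θ₃ = 0 := by linarith
    subst h
    rw [hθ₂, hθ₃]
    simp
  · have h1θ : 0 < 1 - θ₁ := by linarith
    set μ := θ₂ / (1 - θ₁) with hμ
    have hμ0 : 0 ≤ μ := div_nonneg h2 h1θ.le
    have hμ1 : μ ≤ 1 := by rw [hμ, div_le_one h1θ]; linarith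
    have a1 : (1 - θ₁) * μ = θ₂ := by rw [hμ]; field_simp
    have a2 : (1 - θ₁) * (1 - μ) = θ₃ := by rw [hμ]; field_simp; linarith
    have e : θ₂ • y + θ₃ • z = (1 - θ₁) • (μ • y + (1 - μ) • z) := by
      rw [smul_add, smul_smul, smul_smul, a1, a2]
    calc N (θ₁ • x + θ₂ • y + θ₃ • z)
        = N (θ₁ • x + (1 - θ₁) • (μ • y + (1 - μ) • z)) := by rw [add_assoc, e]
      _ ≤ θ₁ * N x + (1 - θ₁) * N (μ • y + (1 - μ) • z) := hN _ _ θ₁ h1 h.le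
      _ ≤ θ₁ * N x + (1 - θ₁) * (μ * N y + (1 - μ) * N z) := by
          have := hN y z μ hμ0 hμ1
          nlinarith
      _ = θ₁ * N x + ((1 - θ₁) * μ) * N y + ((1 - θ₁) * (1 - μ)) * N z := by ring
      _ = θ₁ * N x + θ₂ * N y + θ₃ * N z := by rw [a1, a2]

/-- An `s`-stage multi-derivative IMEX Runge--Kutta method in Shu--Osher form
with nonnegative coefficients `rᵢ, p_{ij}, w_{ij}, d_{ii}` and nonpositive `ḋ_{ii}` is SSP
under the time-step restriction `0 < Δt ≤ r·Δt_FE` coming only from the explicit operator `F`. -/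
theorem SSP_multiderivative_IMEX_RK
    {V : Type*} [AddCommGroup V] [Module ℝ V]
    (N : V → ℝ)
    (hN : ∀ x y : V, ∀ θ : ℝ, 0 ≤ θ → θ ≤ 1 →
      N (θ • x + (1 - θ) • y) ≤ θ * N x + (1 - θ) * N y)
    (F G Gdot : V → V) (ΔtFE k kdot : ℝ)
    (hΔtFE : 0 < ΔtFE) (hk : 0 < k) (hkdot : 0 < kdot)
    (hFEF : ∀ u : V, ∀ h : ℝ, 0 ≤ h → h ≤ ΔtFE → N (u + h • F u) ≤ N u)
    (hFEG : ∀ u : V, ∀ h : ℝ, 0 ≤ h → h ≤ k * ΔtFE → N (u + h • G u) ≤ N u)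
    (hBD : ∀ u : V, ∀ h : ℝ, 0 ≤ h → h ^ 2 ≤ kdot * ΔtFE ^ 2 →
      N (u - (h ^ 2) • Gdot u) ≤ N u)
    (r : ℝ) (hrpos : 0 < r)
    (s : ℕ) (p w : Fin (s + 1) → Fin (s + 1) → ℝ)
    (d ddot rv : Fin (s + 1) → ℝ)
    (hrv : ∀ i, rv i = 1 - ∑ j ∈ Finset.univ.filter (fun j => j < i), (p i j + w i j))
    (hrvnonneg : ∀ i, 0 ≤ rv i) (hp : ∀ i j, 0 ≤ p i j) (hw : ∀ i j, 0 ≤ w i j)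
    (hd : ∀ i, 0 ≤ d i) (hddot : ∀ i, ddot i ≤ 0)
    (Δt : ℝ) (hΔt1 : 0 < Δt) (hΔt2 : Δt ≤ r * ΔtFE)
    (un : V) (u : Fin (s + 1) → V)
    (hstage : ∀ i, u i = rv i • un
      + (∑ j ∈ Finset.univ.filter (fun j => j < i), p i j • u j)
      + (∑ j ∈ Finset.univ.filter (fun j => j < i), w i j • (u j + (Δt / r) • F (u j)))
      + (Δt * d i) • G (u i) + (Δt ^ 2 * ddot i) • Gdot (u i)) :
    N (u (Fin.last s)) ≤ N un := by
  have hconv : ConvexOn ℝ Set.univ N := by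
    refine ⟨convex_univ, fun x _ y _ a b ha hb hab => ?_⟩
    have := hN x y a ha (by linarith)
    rwa [show (1:ℝ) - a = b by linarith] at this
  have hΔtr : 0 ≤ Δt / r := le_of_lt (div_pos hΔt1 hrpos)
  have hΔtr2 : Δt / r ≤ ΔtFE := by
    rw [div_le_iff₀ hrpos]; linarith [mul_comm ΔtFE r]
  have key : ∀ n : ℕ, ∀ i : Fin (s + 1), (i : ℕ) < n → N (u i) ≤ N un := by
    intro n
    induction n with
    | zero => intro i hi; omega
    | succ n ih =>
      intro i hi
      set S := Finset.univ.filter (fun j => j < i) with hS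
      set X := rv i • un + (∑ j ∈ S, p i j • u j)
        + (∑ j ∈ S, w i j • (u j + (Δt / r) • F (u j))) with hXdef
      have ihj : ∀ j ∈ S, N (u j) ≤ N un := by
        intro j hj
        rw [hS, Finset.mem_filter] at hj
        exact ih j (by have := hj.2; omega)
      have ihw : ∀ j ∈ S, N (u j + (Δt / r) • F (u j)) ≤ N un :=
        fun j hj => (hFEF (u j) _ hΔtr hΔtr2).trans (ihj j hj)
      -- The explicit part is a convex combination
      have hX : N X ≤ N un := by
        set W : Unit ⊕ (Fin (s + 1) ⊕ Fin (s + 1)) → ℝ :=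
          Sum.elim (fun _ => rv i) (Sum.elim (p i) (w i)) with hW
        set P : Unit ⊕ (Fin (s + 1) ⊕ Fin (s + 1)) → V :=
          Sum.elim (fun _ => un) (Sum.elim u (fun j => u j + (Δt / r) • F (u j))) with hP
        set T := (({()} : Finset Unit)).disjSum (S.disjSum S) with hT
        have hsum1 : ∑ j ∈ T, W j = 1 := by
          rw [hT, Finset.sum_disjSum, Finset.sum_disjSum]
          simp only [hW, Sum.elim_inl, Sum.elim_inr, Finset.sum_singleton]
          have := hrv i
          rw [Finset.sum_add_distrib] at this
          linarith
        have h₀ : ∀ j ∈ T, 0 ≤ W j := by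
          rintro (j | j | j) _ <;>
            simp only [hW, Sum.elim_inl, Sum.elim_inr] <;>
            [exact hrvnonneg i; exact hp i j; exact hw i j]
        have hle := hconv.map_sum_le (p := P) h₀ hsum1 (fun j _ => Set.mem_univ _)
        have hXeq : ∑ j ∈ T, W j • P j = X := by
          rw [hT, Finset.sum_disjSum, Finset.sum_disjSum]
          simp only [hW, hP, Sum.elim_inl, Sum.elim_inr, Finset.sum_singleton, hXdef]
          abel
        rw [hXeq] at hle
        calc N X ≤ ∑ j ∈ T, W j • N (P j) := hle
          _ ≤ ∑ j ∈ T, W j * N un := by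
              refine Finset.sum_le_sum (fun j hj => ?_)
              rw [smul_eq_mul]
              refine mul_le_mul_of_nonneg_left ?_ (h₀ j hj)
              rcases j with (j | j | j)
              · simp [hP]
              · rw [hT, Finset.mem_disjSum] at hj
                simp only [hP, Sum.elim_inr, Sum.elim_inl]
                refine ihj j ?_
                rcases hj with ⟨a, _, h⟩ | ⟨b, hb, h⟩
                · exact absurd h (by simp)
                · cases h
                  rw [Finset.mem_disjSum] at hb
                  rcases hb with ⟨a, ha, h'⟩ | ⟨b', hb', h'⟩
                  · cases h'; exact ha
                  · exact absurd h' (by simp)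
              · rw [hT, Finset.mem_disjSum] at hj
                simp only [hP, Sum.elim_inr]
                refine ihw j ?_
                rcases hj with ⟨a, _, h⟩ | ⟨b, hb, h⟩
                · exact absurd h (by simp)
                · cases h
                  rw [Finset.mem_disjSum] at hb
                  rcases hb with ⟨a, ha, h'⟩ | ⟨b', hb', h'⟩
                  · exact absurd h' (by simp)
                  · cases h'; exact hb'
          _ = N un := by rw [← Finset.sum_mul, hsum1, one_mul]
      -- The implicit part
      set a := Δt * d i with hadef
      set b := -(Δt ^ 2 * ddot i) with hbdef
      have ha : 0 ≤ a := mul_nonneg hΔt1.le (hd i)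
      have hb : 0 ≤ b := by
        have := hddot i
        have h2 : (0:ℝ) ≤ Δt ^ 2 := sq_nonneg Δt
        nlinarith
      set c := k * ΔtFE with hcdef
      have hc : 0 < c := mul_pos hk hΔtFE
      set m := kdot * ΔtFE ^ 2 with hmdef
      have hm : 0 < m := by positivity
      have hden : 0 < 1 + a / c + b / m := by positivity
      set θ₀ := (1 + a / c + b / m)⁻¹ with hθ₀def
      have hθ₀ : 0 < θ₀ := inv_pos.mpr hden
      set θ₁ := θ₀ * (a / c) with hθ₁def
      set θ₂ := θ₀ * (b / m) with hθ₂def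
      have hθ₁ : 0 ≤ θ₁ := mul_nonneg hθ₀.le (div_nonneg ha hc.le)
      have hθ₂ : 0 ≤ θ₂ := mul_nonneg hθ₀.le (div_nonneg hb hm.le)
      have hsum : θ₀ + θ₁ + θ₂ = 1 := by
        rw [hθ₁def, hθ₂def, hθ₀def]
        field_simp
      have hst : u i = X + a • G (u i) + (Δt ^ 2 * ddot i) • Gdot (u i) := by
        rw [hXdef, hadef]; exact hstage i
      have h2 : X = u i - (Δt ^ 2 * ddot i) • Gdot (u i) - a • G (u i) :=
        eq_sub_of_add_eq (eq_sub_of_add_eq hst.symm)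
      have hX' : X = u i - a • G (u i) + b • Gdot (u i) := by
        rw [hbdef, neg_smul, h2]; abel
      have h1 : θ₁ * c = θ₀ * a := by
        rw [hθ₁def]; field_simp
      have h2' : θ₂ * m = θ₀ * b := by
        rw [hθ₂def]; field_simp
      have hkeyid : u i = θ₁ • (u i + c • G (u i)) + θ₂ • (u i - m • Gdot (u i)) + θ₀ • X := by
        rw [hX']
        have e1 : θ₁ • (u i + c • G (u i)) = θ₁ • u i + (θ₁ * c) • G (u i) := by
          rw [smul_add, smul_smul]
        have e2 : θ₂ • (u i - m • Gdot (u i)) = θ₂ • u i - (θ₂ * m) • Gdot (u i) := by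
          rw [smul_sub, smul_smul]
        have e3 : θ₀ • (u i - a • G (u i) + b • Gdot (u i))
            = θ₀ • u i - (θ₀ * a) • G (u i) + (θ₀ * b) • Gdot (u i) := by
          rw [smul_add, smul_sub, smul_smul, smul_smul]
        rw [e1, e2, e3, h1, h2']
        have e4 : θ₁ • u i + θ₂ • u i + θ₀ • u i = u i := by
          rw [← add_smul, ← add_smul, show θ₁ + θ₂ + θ₀ = 1 by linarith, one_smul]
        calc u i = θ₁ • u i + θ₂ • u i + θ₀ • u i := e4.symm
          _ = θ₁ • u i + (θ₀ * a) • G (u i) + (θ₂ • u i - (θ₀ * b) • Gdot (u i))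
              + (θ₀ • u i - (θ₀ * a) • G (u i) + (θ₀ * b) • Gdot (u i)) := by abel
      have hjensen3 : N (u i) ≤ θ₁ * N (u i + c • G (u i))
          + θ₂ * N (u i - m • Gdot (u i)) + θ₀ * N X := by
        have := convex3_aux N hN (u i + c • G (u i)) (u i - m • Gdot (u i)) X
          θ₁ θ₂ θ₀ hθ₁ hθ₂ hθ₀.le (by linarith)
        rwa [← hkeyid] at this
      have hG : N (u i + c • G (u i)) ≤ N (u i) := hFEG (u i) c hc.le (by rw [hcdef])
      have hGdot : N (u i - m • Gdot (u i)) ≤ N (u i) := by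
        have hsq : (ΔtFE * Real.sqrt kdot) ^ 2 = m := by
          rw [mul_pow, Real.sq_sqrt hkdot.le, hmdef]; ring
        have := hBD (u i) (ΔtFE * Real.sqrt kdot)
          (mul_nonneg hΔtFE.le (Real.sqrt_nonneg _)) (by rw [hsq, hmdef])
        rwa [hsq] at this
      have hfin : N (u i) ≤ θ₁ * N (u i) + θ₂ * N (u i) + θ₀ * N X := by
        calc N (u i) ≤ _ := hjensen3
          _ ≤ θ₁ * N (u i) + θ₂ * N (u i) + θ₀ * N X :=
              add_le_add (add_le_add (mul_le_mul_of_nonneg_left hG hθ₁)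
                (mul_le_mul_of_nonneg_left hGdot hθ₂)) le_rfl
      have e5 : θ₁ * N (u i) + θ₂ * N (u i) = (1 - θ₀) * N (u i) := by
        rw [← add_mul, show θ₁ + θ₂ = 1 - θ₀ by linarith]
      have e6 : N (u i) - (1 - θ₀) * N (u i) = θ₀ * N (u i) := by ring
      have e7 : θ₀ * N (u i) ≤ θ₀ * N X := by linarith
      exact (le_of_mul_le_mul_left e7 hθ₀).trans hX
  exact key (s + 1) (Fin.last s) (by simp [Fin.last])
end

section
/- Let V = ℝᴺ with componentwise positivity (u > 0 means every component of u is positive). Let T : V → V satisfy: there exists Δt_FE > 0 such that u > 0 implies u + h·T(u) > 0 for all 0 ≤ h ≤ Δt_FE (Property 1). Let Q : V → V satisfy: for all u > 0, all τ ≥ 0, and all v with v = u + τ·Q(v), one has v > 0 (Property 2). Let Q̇ : V → V satisfy Q̇(u) = −C(u)·Q(u) for a function C : V → ℝ with C(u) > 0 for all u (Property 5). Fix ε > 0, r > 0, and coefficients rᵢ ≥ 0, p_{ij} ≥ 0, w_{ij} ≥ 0, d_{ii} ≥ 0, ḋ_{ii} ≤ 0 with rᵢ = 1 − Σ_{j<i}(p_{ij}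 + w_{ij}). Suppose uⁿ > 0 and the stages u⁽¹⁾,…,u⁽ˢ⁾ satisfy u⁽ⁱ⁾ = rᵢ·uⁿ + Σ_{j<i} p_{ij}·u⁽ʲ⁾ + Σ_{j<i} w_{ij}·(u⁽ʲ⁾ + (Δt/r)·T(u⁽ʲ⁾)) + (Δt/ε)·d_{ii}·Q(u⁽ⁱ⁾) + (Δt²/ε²)·ḋ_{ii}·Q̇(u⁽ⁱ⁾) for i = 1,…,s. Then for every 0 < Δt ≤ r·Δt_FE, all stages are positive: u⁽ⁱ⁾ > 0 for every i; in particular u^{n+1} = u⁽ˢ⁾ > 0. -/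
open Finset

/-- Positivity preservation of the multi-derivative IMEX Runge--Kutta scheme
for `u' = T(u) + (1/ε)Q(u)`: under Properties 1, 2, 5 and nonnegativity of the Shu--Osher
coefficients (with `ḋ_{ii} ≤ 0`), all stages are componentwise positive for
`0 < Δt ≤ r·Δt_FE`, for every `ε > 0`. -/
theorem IMEX_multiderivative_positivity
    (Nd : ℕ)
    (T Q Qdot : (Fin Nd → ℝ) → (Fin Nd → ℝ))
    (C : (Fin Nd → ℝ) → ℝ) (hC : ∀ u, 0 < C u)
    (hQdot : ∀ u, Qdot u = -C u • Q u)
    (ΔtFE : ℝ) (hΔtFE : 0 < ΔtFE)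
    (hT : ∀ u : Fin Nd → ℝ, (∀ x, 0 < u x) → ∀ h : ℝ, 0 ≤ h → h ≤ ΔtFE →
      ∀ x, 0 < (u + h • T u) x)
    (hQ : ∀ u v : Fin Nd → ℝ, (∀ x, 0 < u x) → ∀ τ : ℝ, 0 ≤ τ →
      v = u + τ • Q v → ∀ x, 0 < v x)
    (ε r : ℝ) (hε : 0 < ε) (hrpos : 0 < r)
    (s : ℕ) (p w : Fin (s + 1) → Fin (s + 1) → ℝ)
    (d ddot rv : Fin (s + 1) → ℝ)
    (hrv : ∀ i, rv i = 1 - ∑ j ∈ Finset.univ.filter (fun j => j < i), (p i j + w i j))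
    (hrvnonneg : ∀ i, 0 ≤ rv i) (hp : ∀ i j, 0 ≤ p i j) (hw : ∀ i j, 0 ≤ w i j)
    (hd : ∀ i, 0 ≤ d i) (hddot : ∀ i, ddot i ≤ 0)
    (Δt : ℝ) (hΔt1 : 0 < Δt) (hΔt2 : Δt ≤ r * ΔtFE)
    (un : Fin Nd → ℝ) (hun : ∀ x, 0 < un x)
    (u : Fin (s + 1) → (Fin Nd → ℝ))
    (hstage : ∀ i, u i = rv i • un
      + (∑ j ∈ Finset.univ.filter (fun j => j < i), p i j • u j)
      + (∑ j ∈ Finset.univ.filter (fun j => j < i), w i j • (u j + (Δt / r) • T (u j)))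
      + (Δt / ε * d i) • Q (u i) + (Δt ^ 2 / ε ^ 2 * ddot i) • Qdot (u i)) :
    ∀ i x, 0 < u i x := by
  have main : ∀ n : ℕ, ∀ i : Fin (s + 1), (i : ℕ) = n → ∀ x, 0 < u i x := by
    intro n
    induction n using Nat.strong_induction_on with
    | _ n ih =>
      intro i hi
      have hIH : ∀ j : Fin (s + 1), j < i → ∀ x, 0 < u j x := by
        intro j hj x
        exact ih j (hi ▸ hj) j rfl x
      set F := Finset.univ.filter (fun j => j < i) with hF
      set v : Fin (s + 1) → (Fin Nd → ℝ) := fun j => u j + (Δt / r) • T (u j) with hvdef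
      have hΔtr : Δt / r ≤ ΔtFE := by
        rw [div_le_iff₀ hrpos]; linarith [mul_comm r ΔtFE]
      have hΔtr0 : (0:ℝ) ≤ Δt / r := le_of_lt (div_pos hΔt1 hrpos)
      have hv : ∀ j : Fin (s + 1), j < i → ∀ x, 0 < v j x := by
        intro j hj x
        exact hT (u j) (hIH j hj) (Δt / r) hΔtr0 hΔtr x
      set a : Fin Nd → ℝ := rv i • un + (∑ j ∈ F, p i j • u j) + (∑ j ∈ F, w i j • v j) with ha
      have hmemF : ∀ j : Fin (s+1), j ∈ F ↔ j < i := by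
        intro j; simp [hF]
      have hapos : ∀ x, 0 < a x := by
        intro x
        have hax : a x = rv i * un x + ∑ j ∈ F, (p i j * u j x + w i j * v j x) := by
          rw [ha]
          simp only [Pi.add_apply, Pi.smul_apply, smul_eq_mul, Finset.sum_apply,
            Finset.sum_add_distrib]
          ring
        rw [hax]
        have hterm_nonneg : ∀ j ∈ F, 0 ≤ p i j * u j x + w i j * v j x := by
          intro j hj
          have hj' : j < i := (hmemF j).1 hj
          have h1 := hIH j hj' x
          have h2 := hv j hj' x
          have := mul_nonneg (hp i j) h1.le
          have := mul_nonneg (hw i j) h2.le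
          linarith
        rcases lt_or_eq_of_le (hrvnonneg i) with h0 | h0
        · have : 0 ≤ ∑ j ∈ F, (p i j * u j x + w i j * v j x) :=
            Finset.sum_nonneg hterm_nonneg
          nlinarith [hun x]
        · have hsum1 : ∑ j ∈ F, (p i j + w i j) = 1 := by
            have := hrv i; rw [← hF] at this; linarith
          have hex : ∃ j ∈ F, 0 < p i j + w i j := by
            by_contra hcon
            push_neg at hcon
            have : ∑ j ∈ F, (p i j + w i j) = 0 := by
              apply Finset.sum_eq_zero
              intro j hj
              exact le_antisymm (hcon j hj) (add_nonneg (hp i j) (hw i j))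
            rw [hsum1] at this; norm_num at this
          obtain ⟨j, hjF, hjpos⟩ := hex
          have hj' : j < i := (hmemF j).1 hjF
          have hujx := hIH j hj' x
          have hvjx := hv j hj' x
          have hjterm : 0 < p i j * u j x + w i j * v j x := by
            rcases lt_or_eq_of_le (hp i j) with hp' | hp'
            · nlinarith [hw i j]
            · have : 0 < w i j := by nlinarith
              nlinarith [hp i j]
          have hspos : 0 < ∑ j ∈ F, (p i j * u j x + w i j * v j x) :=
            Finset.sum_pos' hterm_nonneg ⟨j, hjF, hjterm⟩
          have hz : rv i * un x = 0 := by rw [← h0]; ring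
          linarith
      set τ : ℝ := Δt / ε * d i - Δt ^ 2 / ε ^ 2 * ddot i * C (u i) with hτdef
      have hτ : 0 ≤ τ := by
        have h1 : 0 ≤ Δt / ε * d i := mul_nonneg (div_nonneg hΔt1.le hε.le) (hd i)
        have h2 : 0 ≤ - (Δt ^ 2 / ε ^ 2 * ddot i * C (u i)) := by
          have : Δt ^ 2 / ε ^ 2 * ddot i ≤ 0 :=
            mul_nonpos_of_nonneg_of_nonpos (div_nonneg (sq_nonneg Δt) (sq_nonneg ε)) (hddot i)
          nlinarith [hC (u i)]
        rw [hτdef]; linarith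
      have heq : u i = a + τ • Q (u i) := by
        conv_lhs => rw [hstage i]
        simp only [hQdot, ha, hvdef, hτdef, hF]
        module
      exact hQ a (u i) hapos τ hτ heq
  intro i x
  exact main i.val i rfl x
end

section
/- (Asymptotic preserving limit.) Let Q, Q̇, T : ℝᴺ → ℝᴺ with T and Q continuous, Q̇(u) = −C(u)·Q(u) for a continuous function C : ℝᴺ → ℝ with C(u) > 0 for all u, let ℛ : ℝᴺ → ℝⁿ be linear with ℛ∘Q = 0, and let E : ℝⁿ → ℝᴺ satisfy: Q(u) = 0 implies u = E(ℛu) (Property 4). Fix Δt > 0, r > 0, uⁿ ∈ ℝᴺ, and scheme coefficients with rᵢ = 1 − Σ_{j<i}(p_{ij} + w_{ij}), d_{ii} ≥ 0, ḋ_{ii} ≤ 0, and d_{ii} + |ḋ_{ii}| > 0 for every i. For each ε > 0 let u⁽ⁱ⁾(ε), i = 1,…,s, be stage values of the multi-derivative IMEX scheme with stiffness parameter ε, and suppose u⁽ⁱ⁾(ε) → ū⁽ⁱ⁾ as ε → 0⁺, for each i. Then Q(ū⁽ⁱ⁾) = 0 for every i, hence ū⁽ⁱ⁾ = E(ω⁽ⁱ⁾)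 with ω⁽ⁱ⁾ := ℛ(ū⁽ⁱ⁾), and the limit moments satisfy the explicit Runge–Kutta relations for the limiting system ω' = ℛ(T(E(ω))): ω⁽ⁱ⁾ = rᵢ·ωⁿ + Σ_{j<i} p_{ij}·ω⁽ʲ⁾ + Σ_{j<i} w_{ij}·(ω⁽ʲ⁾ + (Δt/r)·ℛ(T(E(ω⁽ʲ⁾)))), where ωⁿ = ℛ(uⁿ). -/
open Finset

/-- If `f → +∞`, `g → q`, and `f • g` converges, then `q = 0`. -/
lemma aux_smul_lim_zero {N : ℕ} {l : Filter ℝ} [l.NeBot] {f : ℝ → ℝ}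
    {g : ℝ → Fin N → ℝ} {q L : Fin N → ℝ}
    (hf : Filter.Tendsto f l Filter.atTop)
    (hg : Filter.Tendsto g l (nhds q))
    (hfg : Filter.Tendsto (fun ε => f ε • g ε) l (nhds L)) : q = 0 := by
  funext k
  have h1 : Filter.Tendsto (fun ε => f ε * g ε k) l (nhds (L k)) := by
    simpa [Pi.smul_apply, smul_eq_mul] using tendsto_pi_nhds.mp hfg k
  have h2 : Filter.Tendsto (fun ε => (f ε)⁻¹) l (nhds 0) := hf.inv_tendsto_atTop
  have h3 : Filter.Tendsto (fun ε => (f ε)⁻¹ * (f ε * g ε k)) l (nhds (0 * L k)) :=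
    h2.mul h1
  rw [zero_mul] at h3
  have h4 : Filter.Tendsto (fun ε => g ε k) l (nhds 0) := by
    refine h3.congr' ?_
    filter_upwards [hf.eventually_gt_atTop 0] with ε hε
    exact inv_mul_cancel_left₀ hε.ne' _
  exact tendsto_nhds_unique (tendsto_pi_nhds.mp hg k) h4

/-- Asymptotic preserving limit: if, for each `ε > 0`, the stages of the
multi-derivative IMEX scheme converge as `ε → 0⁺` to limits `ū⁽ⁱ⁾`, then the limits are
equilibria (`Q(ū⁽ⁱ⁾) = 0`, so `ū⁽ⁱ⁾ = E(ℛū⁽ⁱ⁾)`) and the limit moments satisfy the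
explicit Runge--Kutta relations for the limiting system `ω' = ℛ(T(E(ω)))`. -/
theorem IMEX_multiderivative_asymptotic_preserving
    (Nd n : ℕ)
    (T Q Qdot : (Fin Nd → ℝ) → (Fin Nd → ℝ))
    (hTcont : Continuous T) (hQcont : Continuous Q)
    (C : (Fin Nd → ℝ) → ℝ) (hCcont : Continuous C) (hCpos : ∀ u, 0 < C u)
    (hQdot : ∀ u, Qdot u = -C u • Q u)
    (R : (Fin Nd → ℝ) →ₗ[ℝ] (Fin n → ℝ)) (hRQ : ∀ u, R (Q u) = 0)
    (E : (Fin n → ℝ) → (Fin Nd → ℝ)) (hE : ∀ u, Q u = 0 → u = E (R u))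
    (Δt r : ℝ) (hΔt : 0 < Δt) (hrpos : 0 < r)
    (s : ℕ) (p w : Fin (s + 1) → Fin (s + 1) → ℝ)
    (d ddot rv : Fin (s + 1) → ℝ)
    (hrv : ∀ i, rv i = 1 - ∑ j ∈ Finset.univ.filter (fun j => j < i), (p i j + w i j))
    (hd : ∀ i, 0 ≤ d i) (hddot : ∀ i, ddot i ≤ 0)
    (hdd : ∀ i, 0 < d i + |ddot i|)
    (un : Fin Nd → ℝ)
    (u : ℝ → Fin (s + 1) → (Fin Nd → ℝ))
    (hstage : ∀ ε : ℝ, 0 < ε → ∀ i, u ε i = rv i • un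
      + (∑ j ∈ Finset.univ.filter (fun j => j < i), p i j • u ε j)
      + (∑ j ∈ Finset.univ.filter (fun j => j < i),
          w i j • (u ε j + (Δt / r) • T (u ε j)))
      + (Δt / ε * d i) • Q (u ε i) + (Δt ^ 2 / ε ^ 2 * ddot i) • Qdot (u ε i))
    (ubar : Fin (s + 1) → (Fin Nd → ℝ))
    (hlim : ∀ i, Filter.Tendsto (fun ε => u ε i)
      (nhdsWithin 0 (Set.Ioi 0)) (nhds (ubar i))) :
    (∀ i, Q (ubar i) = 0) ∧
    (∀ i, ubar i = E (R (ubar i))) ∧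
    (∀ i, R (ubar i) = rv i • R un
      + (∑ j ∈ Finset.univ.filter (fun j => j < i), p i j • R (ubar j))
      + (∑ j ∈ Finset.univ.filter (fun j => j < i),
          w i j • (R (ubar j) + (Δt / r) • R (T (E (R (ubar j))))))) := by
  set l := nhdsWithin (0:ℝ) (Set.Ioi 0) with hl
  have hmem : Set.Ioi (0:ℝ) ∈ l := self_mem_nhdsWithin
  have hQlim : ∀ i, Filter.Tendsto (fun ε => Q (u ε i)) l (nhds (Q (ubar i))) :=
    fun i => (hQcont.tendsto _).comp (hlim i)
  have hTlim : ∀ i, Filter.Tendsto (fun ε => T (u ε i)) l (nhds (T (ubar i))) :=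
    fun i => (hTcont.tendsto _).comp (hlim i)
  have hClim : ∀ i, Filter.Tendsto (fun ε => C (u ε i)) l (nhds (C (ubar i))) :=
    fun i => (hCcont.tendsto _).comp (hlim i)
  have hbase : Filter.Tendsto (fun ε : ℝ => Δt / ε) l Filter.atTop := by
    simpa [div_eq_mul_inv] using tendsto_inv_nhdsGT_zero.const_mul_atTop hΔt
  -- Part 1
  have part1 : ∀ i, Q (ubar i) = 0 := by
    intro i
    set f : ℝ → ℝ := fun ε => Δt / ε * d i + Δt ^ 2 / ε ^ 2 * (-ddot i) * C (u ε i)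
      with hf
    -- the explicit part and its limit
    set e : ℝ → Fin Nd → ℝ := fun ε => rv i • un
      + (∑ j ∈ Finset.univ.filter (fun j => j < i), p i j • u ε j)
      + (∑ j ∈ Finset.univ.filter (fun j => j < i),
          w i j • (u ε j + (Δt / r) • T (u ε j))) with he
    have helim : Filter.Tendsto e l (nhds (rv i • un
        + (∑ j ∈ Finset.univ.filter (fun j => j < i), p i j • ubar j)
        + (∑ j ∈ Finset.univ.filter (fun j => j < i),
            w i j • (ubar j + (Δt / r) • T (ubar j))))) := by
      refine ((tendsto_const_nhds.add (tendsto_finset_sum _ fun j _ =>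
        (hlim j).const_smul _)).add (tendsto_finset_sum _ fun j _ =>
        ((hlim j).add ((hTlim j).const_smul _)).const_smul _))
    have hkey : Filter.Tendsto (fun ε => f ε • Q (u ε i)) l
        (nhds ((ubar i) - (rv i • un
        + (∑ j ∈ Finset.univ.filter (fun j => j < i), p i j • ubar j)
        + (∑ j ∈ Finset.univ.filter (fun j => j < i),
            w i j • (ubar j + (Δt / r) • T (ubar j)))))) := by
      refine ((hlim i).sub helim).congr' ?_
      filter_upwards [hmem] with ε hε
      have hst := hstage ε hε i
      rw [hQdot] at hst
      have h1 : (Δt ^ 2 / ε ^ 2 * ddot i) • (-C (u ε i) • Q (u ε i))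
          = (Δt ^ 2 / ε ^ 2 * (-ddot i) * C (u ε i)) • Q (u ε i) := by
        rw [smul_smul]; congr 1; ring
      show u ε i - (rv i • un
        + (∑ j ∈ Finset.univ.filter (fun j => j < i), p i j • u ε j)
        + (∑ j ∈ Finset.univ.filter (fun j => j < i),
            w i j • (u ε j + (Δt / r) • T (u ε j))))
        = (Δt / ε * d i + Δt ^ 2 / ε ^ 2 * (-ddot i) * C (u ε i)) • Q (u ε i)
      nth_rewrite 1 [hst]
      rw [h1, add_smul]
      abel
    -- f → +∞
    have hfatTop : Filter.Tendsto f l Filter.atTop := by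
      rcases (hd i).lt_or_eq with hdi | hdi
      · refine Filter.tendsto_atTop_mono' l ?_ (hbase.atTop_mul_const hdi)
        filter_upwards [hmem] with ε hε
        have h2 : 0 ≤ Δt ^ 2 / ε ^ 2 * (-ddot i) * C (u ε i) :=
          mul_nonneg (mul_nonneg (div_nonneg (sq_nonneg _) (sq_nonneg _))
            (by linarith [hddot i])) (hCpos _).le
        simp only [hf]; linarith
      · have hddoti : ddot i < 0 := by
          rcases (hddot i).lt_or_eq with h | h
          · exact h
          · exfalso; have := hdd i; rw [← hdi, h] at this; simp at this
        have hc0 : (0:ℝ) < C (ubar i) / 2 := by linarith [hCpos (ubar i)]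
        have hCev : ∀ᶠ ε in l, C (ubar i) / 2 < C (u ε i) :=
          (hClim i).eventually (eventually_gt_nhds (by linarith [hCpos (ubar i)]))
        have hm : Filter.Tendsto
            (fun ε : ℝ => Δt / ε * (Δt / ε) * ((-ddot i) * (C (ubar i) / 2)))
            l Filter.atTop :=
          (hbase.atTop_mul_atTop₀ hbase).atTop_mul_const
            (mul_pos (by linarith) hc0)
        refine Filter.tendsto_atTop_mono' l ?_ hm
        filter_upwards [hmem, hCev] with ε hε hC
        have hε' : (0:ℝ) < ε := hε
        have hpos : 0 < Δt ^ 2 / ε ^ 2 * (-ddot i) := by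
          apply mul_pos (div_pos (pow_pos hΔt 2) (pow_pos hε' 2)); linarith
        have h3 : Δt ^ 2 / ε ^ 2 * (-ddot i) * (C (ubar i) / 2)
            ≤ Δt ^ 2 / ε ^ 2 * (-ddot i) * C (u ε i) :=
          mul_le_mul_of_nonneg_left hC.le hpos.le
        have h4 : Δt / ε * (Δt / ε) = Δt ^ 2 / ε ^ 2 := by
          field_simp
        have h5 : 0 ≤ Δt / ε * d i :=
          mul_nonneg (div_nonneg hΔt.le hε'.le) (hd i)
        simp only [hf]
        calc Δt / ε * (Δt / ε) * ((-ddot i) * (C (ubar i) / 2))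
            = Δt ^ 2 / ε ^ 2 * (-ddot i) * (C (ubar i) / 2) := by rw [h4]; ring
          _ ≤ Δt ^ 2 / ε ^ 2 * (-ddot i) * C (u ε i) := h3
          _ ≤ Δt / ε * d i + Δt ^ 2 / ε ^ 2 * (-ddot i) * C (u ε i) := by linarith
    exact aux_smul_lim_zero hfatTop (hQlim i) hkey
  have part2 : ∀ i, ubar i = E (R (ubar i)) := fun i => hE _ (part1 i)
  refine ⟨part1, part2, ?_⟩
  -- Part 3
  have hRcont : Continuous R := R.continuous_of_finiteDimensional
  have hRQdot : ∀ v, R (Qdot v) = 0 := by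
    intro v; rw [hQdot v, map_smul, hRQ, smul_zero]
  intro i
  have hRstage : ∀ᶠ ε in l, R (u ε i) = rv i • R un
      + (∑ j ∈ Finset.univ.filter (fun j => j < i), p i j • R (u ε j))
      + (∑ j ∈ Finset.univ.filter (fun j => j < i),
          w i j • (R (u ε j) + (Δt / r) • R (T (u ε j)))) := by
    filter_upwards [hmem] with ε hε
    have := congrArg R (hstage ε hε i)
    simpa [map_add, map_smul, map_sum, hRQ, hRQdot] using this
  have hL : Filter.Tendsto (fun ε => R (u ε i)) l (nhds (R (ubar i))) :=
    (hRcont.tendsto _).comp (hlim i)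
  have hRlim : ∀ j, Filter.Tendsto (fun ε => R (u ε j)) l (nhds (R (ubar j))) :=
    fun j => (hRcont.tendsto _).comp (hlim j)
  have hRTlim : ∀ j, Filter.Tendsto (fun ε => R (T (u ε j))) l (nhds (R (T (ubar j)))) :=
    fun j => (hRcont.tendsto _).comp (hTlim j)
  have hRhs : Filter.Tendsto (fun ε => rv i • R un
      + (∑ j ∈ Finset.univ.filter (fun j => j < i), p i j • R (u ε j))
      + (∑ j ∈ Finset.univ.filter (fun j => j < i),
          w i j • (R (u ε j) + (Δt / r) • R (T (u ε j))))) l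
      (nhds (rv i • R un
      + (∑ j ∈ Finset.univ.filter (fun j => j < i), p i j • R (ubar j))
      + (∑ j ∈ Finset.univ.filter (fun j => j < i),
          w i j • (R (ubar j) + (Δt / r) • R (T (ubar j)))))) := by
    exact (tendsto_const_nhds.add (tendsto_finset_sum _ fun j _ =>
      (hRlim j).const_smul _)).add (tendsto_finset_sum _ fun j _ =>
      ((hRlim j).add ((hRTlim j).const_smul _)).const_smul _)
  have hfinal := tendsto_nhds_unique (hL.congr' hRstage) hRhs
  simp only [← part2]
  exact hfinal
end

section
/- Let f, g : ℝ → ℝ be differentiable, and define Q : ℝ² → ℝ² by Q(u₁, u₂) = (0, f(u₁)·(g(u₁) − u₂)). Then Q is differentiable and its Fréchet derivative satisfies Q'(u)(Q(u)) = −f(u₁)·Q(u) for every u = (u₁, u₂) ∈ ℝ². -/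
/-- for the ODE model relaxation operator
`Q(u₁, u₂) = (0, f(u₁)·(g(u₁) − u₂))` with `f, g` differentiable, `Q` is differentiable
and its Fréchet derivative satisfies `Q'(u)(Q(u)) = −f(u₁)·Q(u)`. -/
theorem ODE_model_backward_derivative
    (f g : ℝ → ℝ) (hf : Differentiable ℝ f) (hg : Differentiable ℝ g)
    (Q : ℝ × ℝ → ℝ × ℝ)
    (hQ : ∀ u : ℝ × ℝ, Q u = (0, f u.1 * (g u.1 - u.2))) :
    Differentiable ℝ Q ∧ ∀ u : ℝ × ℝ, fderiv ℝ Q u (Q u) = (-f u.1) • Q u := by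
  have hQeq : Q = fun u : ℝ × ℝ => ((0 : ℝ), f u.1 * (g u.1 - u.2)) := funext hQ
  subst hQeq
  have hD : ∀ u : ℝ × ℝ,
      HasFDerivAt (fun u : ℝ × ℝ => ((0 : ℝ), f u.1 * (g u.1 - u.2)))
        ((0 : ℝ × ℝ →L[ℝ] ℝ).prod
          (f u.1 • (((fderiv ℝ g u.1).comp (ContinuousLinearMap.fst ℝ ℝ ℝ)) -
              ContinuousLinearMap.snd ℝ ℝ ℝ) +
           (g u.1 - u.2) • ((fderiv ℝ f u.1).comp (ContinuousLinearMap.fst ℝ ℝ ℝ)))) u := by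
    intro u
    have hfc : HasFDerivAt (fun u : ℝ × ℝ => f u.1)
        ((fderiv ℝ f u.1).comp (ContinuousLinearMap.fst ℝ ℝ ℝ)) u :=
      ((hf u.1).hasFDerivAt).comp u (hasFDerivAt_fst)
    have hgc : HasFDerivAt (fun u : ℝ × ℝ => g u.1 - u.2)
        ((((fderiv ℝ g u.1).comp (ContinuousLinearMap.fst ℝ ℝ ℝ)) -
          ContinuousLinearMap.snd ℝ ℝ ℝ)) u :=
      (((hg u.1).hasFDerivAt).comp u (hasFDerivAt_fst)).sub (hasFDerivAt_snd)
    exact HasFDerivAt.prodMk (hasFDerivAt_const (0 : ℝ) u) (hfc.mul hgc)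
  constructor
  · exact fun u => (hD u).differentiableAt
  · intro u
    rw [(hD u).fderiv]
    simp [ContinuousLinearMap.prod_apply, Prod.smul_mk]
end

section
/- Define Q : ℝ³ → ℝ³ by Q(f₊, f₀, f₋) = (q, −q, q) where q = f₀² − f₊·f₋. Then Q is differentiable and its Fréchet derivative satisfies Q'(f)(Q(f)) = −ρ·Q(f) for every f = (f₊, f₀, f₋) ∈ ℝ³, where ρ := f₊ + 2f₀ + f₋. -/
lemma broadwell_hasFDeriv (f : ℝ × ℝ × ℝ) :
    ∃ L : (ℝ × ℝ × ℝ) →L[ℝ] ℝ,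
      HasFDerivAt (fun g : ℝ × ℝ × ℝ => g.2.1 ^ 2 - g.1 * g.2.2) L f ∧
      ∀ v : ℝ × ℝ × ℝ, L v = 2 * f.2.1 * v.2.1 - (f.1 * v.2.2 + v.1 * f.2.2) := by
  have h1 : HasFDerivAt (fun g : ℝ × ℝ × ℝ => g.1)
      (ContinuousLinearMap.fst ℝ ℝ (ℝ × ℝ)) f := hasFDerivAt_fst
  have h2 : HasFDerivAt (fun g : ℝ × ℝ × ℝ => g.2.1)
      ((ContinuousLinearMap.fst ℝ ℝ ℝ).comp (ContinuousLinearMap.snd ℝ ℝ (ℝ × ℝ))) f :=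
    hasFDerivAt_fst.comp f hasFDerivAt_snd
  have h3 : HasFDerivAt (fun g : ℝ × ℝ × ℝ => g.2.2)
      ((ContinuousLinearMap.snd ℝ ℝ ℝ).comp (ContinuousLinearMap.snd ℝ ℝ (ℝ × ℝ))) f :=
    hasFDerivAt_snd.comp f hasFDerivAt_snd
  simp only [pow_two]
  refine ⟨_, (h2.mul h2).sub (h1.mul h3), ?_⟩
  intro v
  simp [ContinuousLinearMap.smul_apply]
  ring

/-- for the Broadwell collision operator
`Q(f₊, f₀, f₋) = (q, −q, q)` with `q = f₀² − f₊·f₋`, `Q` is differentiable and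
`Q'(f)(Q(f)) = −ρ·Q(f)` where `ρ = f₊ + 2f₀ + f₋`. -/
theorem Broadwell_backward_derivative
    (Q : ℝ × ℝ × ℝ → ℝ × ℝ × ℝ)
    (hQ : ∀ f : ℝ × ℝ × ℝ, Q f =
      (f.2.1 ^ 2 - f.1 * f.2.2, -(f.2.1 ^ 2 - f.1 * f.2.2), f.2.1 ^ 2 - f.1 * f.2.2)) :
    Differentiable ℝ Q ∧
    ∀ f : ℝ × ℝ × ℝ, fderiv ℝ Q f (Q f) = (-(f.1 + 2 * f.2.1 + f.2.2)) • Q f := by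
  have hQ' : Q = fun f : ℝ × ℝ × ℝ =>
      (f.2.1 ^ 2 - f.1 * f.2.2, -(f.2.1 ^ 2 - f.1 * f.2.2), f.2.1 ^ 2 - f.1 * f.2.2) :=
    funext hQ
  have key : ∀ f : ℝ × ℝ × ℝ, ∃ L : (ℝ × ℝ × ℝ) →L[ℝ] (ℝ × ℝ × ℝ),
      HasFDerivAt Q L f ∧
      ∀ v : ℝ × ℝ × ℝ, L v =
        (2 * f.2.1 * v.2.1 - (f.1 * v.2.2 + v.1 * f.2.2),
         -(2 * f.2.1 * v.2.1 - (f.1 * v.2.2 + v.1 * f.2.2)),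
         2 * f.2.1 * v.2.1 - (f.1 * v.2.2 + v.1 * f.2.2)) := by
    intro f
    obtain ⟨L, hL, hLv⟩ := broadwell_hasFDeriv f
    refine ⟨L.prod ((-L).prod L), ?_, ?_⟩
    · rw [hQ']
      exact HasFDerivAt.prodMk hL (HasFDerivAt.prodMk (HasFDerivAt.neg hL) hL)
    · intro v; simp [hLv v]
  constructor
  · intro f
    obtain ⟨L, hL, _⟩ := key f
    exact hL.differentiableAt
  · intro f
    obtain ⟨L, hL, hLv⟩ := key f
    rw [hL.fderiv, hLv (Q f), hQ f]
    simp [Prod.smul_mk]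
    constructor
    · ring
    constructor
    · ring
    · ring
end
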